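/- In any symmetric monoidal category, the canonical associo-commutators satisfy the 4×4 interchange axiom: for all objects x,y,z,t,x',y',z',t', the square formed by b(x⊕y, z⊕t, x'⊕y', z'⊕t'), b(x,y,x',y') ⊕ b(z,t,z',t'), b(x,y,z,t) ⊕ b(x',y',z',t'), b(x⊕z, y⊕t, x'⊕z', y'⊕t'), b(x⊕x', y⊕y', z⊕z', t⊕t'), and b(x,z,x',z') ⊕ b(y,t,y',t') commutes (the two composite paths from [(x⊕y)⊕(z⊕t)]⊕[(x'⊕y')⊕(z'⊕t')] to [(x⊕x')⊕(z⊕z')]⊕[(y⊕y')⊕(t⊕t')] are equal). -/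

import Mathlib

open CategoryTheory MonoidalCategory

section Aux

set_option maxHeartbeats 1000000

variable {C : Type*} [Category C] [MonoidalCategory C] [SymmetricCategory C]

theorem tensorμ_symm' (a₁ a₂ b₁ b₂ : C) :
    tensorμ a₁ a₂ b₁ b₂ ≫ ((β_ a₁ b₁).hom ⊗ₘ (β_ a₂ b₂).hom) =
      (β_ (a₁ ⊗ a₂) (b₁ ⊗ b₂)).hom ≫ tensorμ b₁ b₂ a₁ a₂ := by
  simp only [tensorμ, Category.assoc, BraidedCategory.braiding_naturality,
    BraidedCategory.braiding_tensor_right_hom, BraidedCategory.braiding_tensor_left_hom,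
    comp_whiskerRight, whisker_assoc, MonoidalCategory.whiskerLeft_comp, pentagon_assoc,
    pentagon_inv_hom_hom_hom_inv_assoc, Iso.inv_hom_id_assoc, whiskerLeft_hom_inv_assoc]
  slice_rhs 11 12 =>
    rw [← MonoidalCategory.whiskerLeft_comp, ← comp_whiskerRight, SymmetricCategory.symmetry]
  rw [MonoidalCategory.tensorHom_def]
  simp only [id_whiskerRight, MonoidalCategory.whiskerLeft_id, Category.id_comp, Category.assoc]
  monoidal

theorem tensorμ_exchange' (b₁ b₂ c₁ c₂ d₁ d₂ : C) :
    (α_ (b₁ ⊗ b₂) (c₁ ⊗ c₂) (d₁ ⊗ d₂)).inv ≫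
        ((β_ (b₁ ⊗ b₂) (c₁ ⊗ c₂)).hom ▷ (d₁ ⊗ d₂)) ≫
        (α_ (c₁ ⊗ c₂) (b₁ ⊗ b₂) (d₁ ⊗ d₂)).hom ≫
        ((c₁ ⊗ c₂) ◁ tensorμ b₁ b₂ d₁ d₂) ≫ tensorμ c₁ c₂ (b₁ ⊗ d₁) (b₂ ⊗ d₂) =
      ((b₁ ⊗ b₂) ◁ tensorμ c₁ c₂ d₁ d₂) ≫ tensorμ b₁ b₂ (c₁ ⊗ d₁) (c₂ ⊗ d₂) ≫
        (((α_ b₁ c₁ d₁).inv ≫ (β_ b₁ c₁).hom ▷ d₁ ≫ (α_ c₁ b₁ d₁).hom) ⊗ₘ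
          ((α_ b₂ c₂ d₂).inv ≫ (β_ b₂ c₂).hom ▷ d₂ ≫ (α_ c₂ b₂ d₂).hom)) := by
  rw [show ∀ {p q r p' q' r' s s' : C} (f₁ : p ⟶ q) (g₁ : q ⟶ r) (h₁ : r ⟶ s)
      (f₂ : p' ⟶ q') (g₂ : q' ⟶ r') (h₂ : r' ⟶ s'),
      (f₁ ≫ g₁ ≫ h₁ ⊗ₘ f₂ ≫ g₂ ≫ h₂) = (f₁ ⊗ₘ f₂) ≫ (g₁ ⊗ₘ g₂) ≫ (h₁ ⊗ₘ h₂) from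
      fun _ _ _ _ _ _ => by simp]
  have ha := tensor_associativity b₁ b₂ c₁ c₂ d₁ d₂
  have ha' : ((b₁ ⊗ b₂) ◁ tensorμ c₁ c₂ d₁ d₂) ≫ tensorμ b₁ b₂ (c₁ ⊗ d₁) (c₂ ⊗ d₂) =
      (α_ (b₁ ⊗ b₂) (c₁ ⊗ c₂) (d₁ ⊗ d₂)).inv ≫ (tensorμ b₁ b₂ c₁ c₂ ▷ (d₁ ⊗ d₂)) ≫
        tensorμ (b₁ ⊗ c₁) (b₂ ⊗ c₂) d₁ d₂ ≫ ((α_ b₁ c₁ d₁).hom ⊗ₘ (α_ b₂ c₂ d₂).hom) := by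
    rw [eq_comm, Iso.inv_comp_eq, ha]
  slice_rhs 1 2 => rw [ha']
  slice_rhs 4 5 => rw [tensorHom_comp_tensorHom, Iso.hom_inv_id, Iso.hom_inv_id, id_tensorHom_id]
  rw [Category.id_comp]
  slice_rhs 3 4 => rw [← tensorμ_natural_left]
  slice_rhs 2 3 => rw [← comp_whiskerRight, tensorμ_symm', comp_whiskerRight]
  slice_rhs 3 5 => rw [tensor_associativity]

theorem tensorμ_interchange' (a₁ a₂ b₁ b₂ c₁ c₂ d₁ d₂ : C) :
    tensorμ (a₁ ⊗ a₂) (b₁ ⊗ b₂) (c₁ ⊗ c₂) (d₁ ⊗ d₂) ≫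
        (tensorμ a₁ a₂ c₁ c₂ ⊗ₘ tensorμ b₁ b₂ d₁ d₂) ≫
        tensorμ (a₁ ⊗ c₁) (a₂ ⊗ c₂) (b₁ ⊗ d₁) (b₂ ⊗ d₂) =
      (tensorμ a₁ a₂ b₁ b₂ ⊗ₘ tensorμ c₁ c₂ d₁ d₂) ≫
        tensorμ (a₁ ⊗ b₁) (a₂ ⊗ b₂) (c₁ ⊗ d₁) (c₂ ⊗ d₂) ≫
        (tensorμ a₁ b₁ c₁ d₁ ⊗ₘ tensorμ a₂ b₂ c₂ d₂) := by
  rw [← cancel_mono ((α_ a₁ c₁ (b₁ ⊗ d₁)).hom ⊗ₘ (α_ a₂ c₂ (b₂ ⊗ d₂)).hom)]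
  -- transform the left-hand side
  rw [tensorHom_def' (tensorμ a₁ a₂ c₁ c₂) (tensorμ b₁ b₂ d₁ d₂)]
  simp only [Category.assoc]
  slice_lhs 3 5 => rw [tensor_associativity]
  slice_lhs 2 3 => rw [associator_naturality_right]
  have hE : tensorμ (a₁ ⊗ a₂) (b₁ ⊗ b₂) (c₁ ⊗ c₂) (d₁ ⊗ d₂) ≫
      (α_ (a₁ ⊗ a₂) (c₁ ⊗ c₂) ((b₁ ⊗ b₂) ⊗ (d₁ ⊗ d₂))).hom =
      (α_ (a₁ ⊗ a₂) (b₁ ⊗ b₂) ((c₁ ⊗ c₂) ⊗ (d₁ ⊗ d₂))).hom ≫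
        ((a₁ ⊗ a₂) ◁ ((α_ (b₁ ⊗ b₂) (c₁ ⊗ c₂) (d₁ ⊗ d₂)).inv ≫
          ((β_ (b₁ ⊗ b₂) (c₁ ⊗ c₂)).hom ▷ (d₁ ⊗ d₂)) ≫
          (α_ (c₁ ⊗ c₂) (b₁ ⊗ b₂) (d₁ ⊗ d₂)).hom)) := by
    dsimp only [tensorμ]
    simp only [MonoidalCategory.whiskerLeft_comp, Category.assoc, Iso.inv_hom_id,
      Category.comp_id]
  slice_lhs 1 2 => rw [hE]
  simp only [MonoidalCategory.whiskerLeft_comp, Category.assoc]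
  rw [← MonoidalCategory.whiskerLeft_comp_assoc, ← MonoidalCategory.whiskerLeft_comp_assoc,
    ← MonoidalCategory.whiskerLeft_comp_assoc, ← MonoidalCategory.whiskerLeft_comp_assoc]
  simp only [Category.assoc]
  rw [show (α_ (b₁ ⊗ b₂) (c₁ ⊗ c₂) (d₁ ⊗ d₂)).inv ≫
        ((β_ (b₁ ⊗ b₂) (c₁ ⊗ c₂)).hom ▷ (d₁ ⊗ d₂)) ≫
        (α_ (c₁ ⊗ c₂) (b₁ ⊗ b₂) (d₁ ⊗ d₂)).hom ≫
        ((c₁ ⊗ c₂) ◁ tensorμ b₁ b₂ d₁ d₂) ≫ tensorμ c₁ c₂ (b₁ ⊗ d₁) (b₂ ⊗ d₂) = _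
    from tensorμ_exchange' b₁ b₂ c₁ c₂ d₁ d₂]
  simp only [MonoidalCategory.whiskerLeft_comp, Category.assoc]
  rw [tensorμ_natural_right a₁ a₂
    ((α_ b₁ c₁ d₁).inv ≫ (β_ b₁ c₁).hom ▷ d₁ ≫ (α_ c₁ b₁ d₁).hom)
    ((α_ b₂ c₂ d₂).inv ≫ (β_ b₂ c₂).hom ▷ d₂ ≫ (α_ c₂ b₂ d₂).hom)]
  -- transform the right-hand side
  rw [tensorHom_def' (tensorμ a₁ a₂ b₁ b₂) (tensorμ c₁ c₂ d₁ d₂)]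
  rw [show (tensorμ a₁ b₁ c₁ d₁ ⊗ₘ tensorμ a₂ b₂ c₂ d₂) =
      ((α_ a₁ b₁ (c₁ ⊗ d₁)).hom ⊗ₘ (α_ a₂ b₂ (c₂ ⊗ d₂)).hom) ≫
        ((a₁ ◁ ((α_ b₁ c₁ d₁).inv ≫ (β_ b₁ c₁).hom ▷ d₁ ≫ (α_ c₁ b₁ d₁).hom)) ⊗ₘ
          (a₂ ◁ ((α_ b₂ c₂ d₂).inv ≫ (β_ b₂ c₂).hom ▷ d₂ ≫ (α_ c₂ b₂ d₂).hom))) ≫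
        ((α_ a₁ c₁ (b₁ ⊗ d₁)).inv ⊗ₘ (α_ a₂ c₂ (b₂ ⊗ d₂)).inv) from by
      simp only [tensorμ, MonoidalCategory.whiskerLeft_comp, Category.assoc, ← tensorHom_comp_tensorHom]]
  simp only [Category.assoc]
  slice_rhs 6 7 => rw [tensorHom_comp_tensorHom, Iso.inv_hom_id, Iso.inv_hom_id, id_tensorHom_id]
  rw [Category.comp_id]
  rw [tensor_associativity_assoc]
  rw [associator_naturality_right_assoc]

end Aux

/-- The canonical associo-commutator `b(x,y,z,t) : (x⊕y)⊕(z⊕t) ⟶ (x⊕z)⊕(y⊕t)` of a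
symmetric monoidal category, defined as the composite
`a⁻¹ ; (id ⊕ a) ; (id ⊕ (c ⊕ id)) ; (id ⊕ a⁻¹) ; a` (in the paper's conventions). -/
noncomputable def ac {C : Type*} [Category C] [MonoidalCategory C] [BraidedCategory C]
    (x y z t : C) : (x ⊗ y) ⊗ (z ⊗ t) ⟶ (x ⊗ z) ⊗ (y ⊗ t) :=
  (α_ x y (z ⊗ t)).hom ≫ (x ◁ (α_ y z t).inv) ≫ (x ◁ ((β_ y z).hom ▷ t)) ≫
    (x ◁ (α_ z y t).hom) ≫ (α_ x z (y ⊗ t)).inv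

/-- The 4×4 interchange axiom for the canonical associo-commutators. -/
theorem stmt8 {C : Type*} [Category C] [MonoidalCategory C] [SymmetricCategory C]
    (x y z t x' y' z' t' : C) :
    ac (x ⊗ y) (z ⊗ t) (x' ⊗ y') (z' ⊗ t') ≫
        (ac x y x' y' ⊗ₘ ac z t z' t') ≫
        ac (x ⊗ x') (y ⊗ y') (z ⊗ z') (t ⊗ t') =
      (ac x y z t ⊗ₘ ac x' y' z' t') ≫
        ac (x ⊗ z) (y ⊗ t) (x' ⊗ z') (y' ⊗ t') ≫
        (ac x z x' z' ⊗ₘ ac y t y' t') := by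
  show tensorμ (x ⊗ y) (z ⊗ t) (x' ⊗ y') (z' ⊗ t') ≫
      (tensorμ x y x' y' ⊗ₘ tensorμ z t z' t') ≫
      tensorμ (x ⊗ x') (y ⊗ y') (z ⊗ z') (t ⊗ t') =
    (tensorμ x y z t ⊗ₘ tensorμ x' y' z' t') ≫
      tensorμ (x ⊗ z) (y ⊗ t) (x' ⊗ z') (y' ⊗ t') ≫
      (tensorμ x z x' z' ⊗ₘ tensorμ y t y' t')
  exact tensorμ_interchange' x y z t x' y' z' t'
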